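/- Ibragimov–Linnik covariance inequality: let (Ω, F, P) be a probability space and A, B two sub-σ-algebras of F. Define the mixing coefficient φ(A,B) = sup{ |P(A∩B) − P(A)P(B)| / P(B) : A ∈ A, B ∈ B, P(B) > 0 }. Then for every real random variable X that is A-measurable and square-integrable and every real random variable Y that is B-measurable and square-integrable, |E[XY] − E[X]E[Y]| ≤ 2 φ(A,B)^{1/2} ‖X‖_{L²} ‖Y‖_{L²}. -/

import Mathlib

open MeasureTheory



section
variable {Ω : Type*} [F : MeasurableSpace Ω] (P : Measure Ω) [IsProbabilityMeasure P]

omit [IsProbabilityMeasure P] in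
lemma cs_integral {f g : Ω → ℝ}
    (hf : MemLp f 2 P) (hg : MemLp g 2 P) :
    |∫ ω, f ω * g ω ∂P| ≤ (eLpNorm f 2 P).toReal * (eLpNorm g 2 P).toReal := by
  have h1 : (inner (𝕜 := ℝ) (hf.toLp f) (hg.toLp g) : ℝ) = ∫ ω, f ω * g ω ∂P := by
    rw [L2.inner_def]
    apply integral_congr_ae
    filter_upwards [hf.coeFn_toLp, hg.coeFn_toLp] with ω h1 h2
    rw [h1, h2]
    simp [RCLike.inner_apply]
    ring
  rw [← h1, ← Lp.norm_toLp f hf, ← Lp.norm_toLp g hg]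
  exact abs_real_inner_le_norm _ _

omit [IsProbabilityMeasure P] in
lemma sq_eLpNorm {f : Ω → ℝ}
    (hf : MemLp f 2 P) :
    (eLpNorm f 2 P).toReal ^ 2 = ∫ ω, f ω ^ 2 ∂P := by
  have h1 : (inner (𝕜 := ℝ) (hf.toLp f) (hf.toLp f) : ℝ) = ∫ ω, f ω ^ 2 ∂P := by
    rw [L2.inner_def]
    apply integral_congr_ae
    filter_upwards [hf.coeFn_toLp] with ω h1
    rw [h1]
    simp [RCLike.inner_apply, sq]
  rw [← Lp.norm_toLp f hf, ← real_inner_self_eq_norm_sq, h1]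

lemma core (𝔄 𝔅 : MeasurableSpace Ω) (h𝔄 : 𝔄 ≤ F) (h𝔅 : 𝔅 ≤ F)
    (φ : ℝ) (hφ0 : 0 ≤ φ)
    (hφ : ∀ A B : Set Ω, MeasurableSet[𝔄] A → MeasurableSet[𝔅] B → 0 < (P B).toReal →
      |(P (A ∩ B)).toReal - (P A).toReal * (P B).toReal| ≤ φ * (P B).toReal)
    (X : Ω → ℝ) (hX : Measurable[𝔄] X) (hX2 : MemLp X 2 P)
    (t : Finset ℝ) (B : ℝ → Set Ω) (hB : ∀ c, MeasurableSet[𝔅] (B c))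
    (hdisj : ∀ c ∈ t, ∀ d ∈ t, c ≠ d → Disjoint (B c) (B d)) :
    |(∫ ω, X ω * (∑ c ∈ t, (B c).indicator (fun _ => c) ω) ∂P) -
      (∫ ω, X ω ∂P) * (∫ ω, (∑ c ∈ t, (B c).indicator (fun _ => c) ω) ∂P)| ≤
    2 * Real.sqrt φ * (eLpNorm X 2 P).toReal *
      (eLpNorm (fun ω => ∑ c ∈ t, (B c).indicator (fun _ => c) ω) 2 P).toReal := by
  letI : MeasurableSpace Ω := F
  set Y : Ω → ℝ := fun ω => ∑ c ∈ t, (B c).indicator (fun _ => c) ω with hYdef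
  set ind : ℝ → Ω → ℝ := fun c => (B c).indicator (fun _ => (1:ℝ)) with hind_def
  set g : ℝ → Ω → ℝ := fun c => P[ind c | 𝔄] with hgdef
  set Q : ℝ → ℝ := fun c => (P (B c)).toReal with hQdef
  set f : ℝ → Ω → ℝ := fun c ω => g c ω - Q c with hfdef
  set k : Ω → ℝ := fun ω => ∑ c ∈ t, c * f c ω with hkdef
  have hBF : ∀ c, MeasurableSet[F] (B c) := fun c => h𝔅 _ (hB c)
  have hXint : Integrable X P := hX2.integrable one_le_two
  have hXm : Measurable[F] X := hX.mono h𝔄 le_rfl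
  have hind_int : ∀ c, Integrable (ind c) P := by
    intro c
    exact (integrable_const (1:ℝ)).indicator (hBF c)
  have hQ0 : ∀ c, 0 ≤ Q c := fun c => ENNReal.toReal_nonneg
  have hQ1 : ∀ c, Q c ≤ 1 := by
    intro c
    refine ENNReal.toReal_le_of_le_ofReal zero_le_one ?_
    simpa using prob_le_one (μ := P) (s := B c)
  have hg_nonneg : ∀ c, 0 ≤ᵐ[P] g c := by
    intro c
    refine condExp_nonneg ?_
    exact Filter.Eventually.of_forall fun ω => Set.indicator_nonneg (fun _ _ => zero_le_one) ω
  have hind_le_one : ∀ c ω, ind c ω ≤ 1 := by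
    intro c ω
    by_cases h : ω ∈ B c <;> simp [hind_def, h]
  have hind_nonneg : ∀ c ω, 0 ≤ ind c ω := by
    intro c ω
    by_cases h : ω ∈ B c <;> simp [hind_def, h]
  have hg_le_one : ∀ c, g c ≤ᵐ[P] fun _ => (1:ℝ) := by
    intro c
    have h1 : ind c ≤ᵐ[P] fun _ => (1:ℝ) :=
      Filter.Eventually.of_forall fun ω => hind_le_one c ω
    have h2 := condExp_mono (m := 𝔄) (hind_int c) (integrable_const (1:ℝ)) h1
    refine h2.trans ?_
    rw [condExp_const h𝔄]
  have hf_meas : ∀ c, StronglyMeasurable[𝔄] (f c) := by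
    intro c
    exact stronglyMeasurable_condExp.sub stronglyMeasurable_const
  have hf_measF : ∀ c, AEStronglyMeasurable (f c) P :=
    fun c => ((hf_meas c).mono h𝔄).aestronglyMeasurable
  have hf_int : ∀ c, Integrable (f c) P := fun c => integrable_condExp.sub (integrable_const _)
  have hf_bd : ∀ c, ∀ᵐ ω ∂P, |f c ω| ≤ 1 := by
    intro c
    filter_upwards [hg_nonneg c, hg_le_one c] with ω h0 h1
    simp only [Pi.zero_apply] at h0
    rw [abs_le]
    exact ⟨by simp only [hfdef]; linarith [hQ1 c], by simp only [hfdef]; linarith [hQ0 c]⟩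
  -- step (d): ∫ |f c| ≤ 2 φ Q c
  have hEf : ∀ c, ∫ ω, |f c ω| ∂P ≤ 2 * φ * Q c := by
    intro c
    by_cases hPB : P (B c) = 0
    · have hQc : Q c = 0 := by simp [hQdef, hPB]
      have hind0 : ind c =ᵐ[P] 0 := by
        filter_upwards [measure_eq_zero_iff_ae_notMem.mp hPB] with ω hω
        simp [hind_def, Set.indicator_of_notMem hω]
      have hg0 : g c =ᵐ[P] 0 := by
        have h1 := condExp_congr_ae (m := 𝔄) (μ := P) hind0
        rw [condExp_zero] at h1
        exact h1
      have hf0 : (fun ω => |f c ω|) =ᵐ[P] 0 := by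
        filter_upwards [hg0] with ω hω
        simp only [hfdef, Pi.zero_apply] at hω ⊢
        simp [hω, hQc]
      rw [integral_congr_ae hf0]
      simp [hQc]
    · have hQpos : 0 < Q c := ENNReal.toReal_pos hPB (measure_ne_top P _)
      set A : Set Ω := f c ⁻¹' (Set.Ici 0) with hAdef
      have hA𝔄 : MeasurableSet[𝔄] A := (hf_meas c).measurable measurableSet_Ici
      have hAc𝔄 : MeasurableSet[𝔄] Aᶜ := hA𝔄.compl
      have hAF : MeasurableSet[F] A := h𝔄 _ hA𝔄
      have setint : ∀ S : Set Ω, MeasurableSet[𝔄] S →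
          ∫ ω in S, f c ω ∂P = (P (S ∩ B c)).toReal - (P S).toReal * Q c := by
        intro S hS𝔄
        have h1 : ∫ ω in S, f c ω ∂P = (∫ ω in S, g c ω ∂P) - (P S).toReal * Q c := by
          simp only [hfdef]
          rw [integral_sub (integrable_condExp.integrableOn)
            (integrableOn_const (C := Q c) (measure_ne_top _ _))]
          congr 1
          rw [setIntegral_const, smul_eq_mul, measureReal_def]
        have h2 : ∫ ω in S, g c ω ∂P = ∫ ω in S, ind c ω ∂P :=
          setIntegral_condExp h𝔄 (hind_int c) hS𝔄
        have h3 : ∫ ω in S, ind c ω ∂P = (P (S ∩ B c)).toReal := by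
          simp only [hind_def]
          rw [setIntegral_indicator (hBF c), setIntegral_const, smul_eq_mul, mul_one, measureReal_def]
        rw [h1, h2, h3]
      have habs : ∫ ω, |f c ω| ∂P =
          (∫ ω in A, f c ω ∂P) + ∫ ω in Aᶜ, (- f c ω) ∂P := by
        rw [← integral_add_compl hAF ((hf_int c).abs)]
        congr 1
        · refine setIntegral_congr_fun hAF fun ω hω => ?_
          exact abs_of_nonneg hω
        · refine setIntegral_congr_fun hAF.compl fun ω hω => ?_
          have : ¬ (0 ≤ f c ω) := hω
          exact abs_of_neg (lt_of_not_ge this)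
      have b1 : ∫ ω in A, f c ω ∂P ≤ φ * Q c := by
        rw [setint A hA𝔄]
        exact le_of_abs_le (hφ A (B c) hA𝔄 (hB c) hQpos)
      have b2 : ∫ ω in Aᶜ, (- f c ω) ∂P ≤ φ * Q c := by
        rw [integral_neg, setint Aᶜ hAc𝔄]
        have := hφ Aᶜ (B c) hAc𝔄 (hB c) hQpos
        have h' := neg_le_of_abs_le this
        linarith
      rw [habs]
      linarith
  -- step (c): a.e. sum of |f c| ≤ 2
  have hQ_int : ∀ c, Q c = ∫ ω, ind c ω ∂P := by
    intro c
    rw [hind_def]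
    simp only
    rw [integral_indicator_const (1:ℝ) (hBF c), smul_eq_mul, mul_one, measureReal_def]
  have hQsum : ∑ c ∈ t, Q c ≤ 1 := by
    have h1 : ∑ c ∈ t, Q c = ∫ ω, (∑ c ∈ t, ind c ω) ∂P := by
      rw [integral_finset_sum t fun c _ => hind_int c]
      exact Finset.sum_congr rfl fun c _ => hQ_int c
    have hptw : ∀ ω, (∑ c ∈ t, ind c ω) ≤ 1 := by
      intro ω
      by_cases h : ∃ c ∈ t, ω ∈ B c
      · obtain ⟨c₀, hc₀t, hc₀⟩ := h
        have hsingle : ∑ c ∈ t, ind c ω = ind c₀ ω := by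
          refine Finset.sum_eq_single_of_mem c₀ hc₀t fun d hd hne => ?_
          have hnd : ω ∉ B d := fun hωd =>
            Set.disjoint_left.mp (hdisj d hd c₀ hc₀t hne) hωd hc₀
          simp [hind_def, Set.indicator_of_notMem hnd]
        rw [hsingle]
        exact hind_le_one c₀ ω
      · push_neg at h
        have : ∑ c ∈ t, ind c ω = 0 :=
          Finset.sum_eq_zero fun d hd => by
            simp [hind_def, Set.indicator_of_notMem (h d hd)]
        rw [this]; norm_num
    rw [h1]
    calc ∫ ω, (∑ c ∈ t, ind c ω) ∂P ≤ ∫ _, (1:ℝ) ∂P :=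
          integral_mono (integrable_finset_sum t fun c _ => hind_int c)
            (integrable_const 1) hptw
      _ = 1 := by simp
  have hsum_g : ∀ᵐ ω ∂P, ∑ c ∈ t, g c ω ≤ 1 := by
    have h1 : P[(∑ c ∈ t, ind c)|𝔄] =ᵐ[P] ∑ c ∈ t, g c :=
      condExp_finset_sum (fun c _ => hind_int c) 𝔄
    have h2 : P[(∑ c ∈ t, ind c)|𝔄] ≤ᵐ[P] fun _ => (1:ℝ) := by
      have hb : (∑ c ∈ t, ind c) ≤ᵐ[P] fun _ => (1:ℝ) := by
        refine Filter.Eventually.of_forall fun ω => ?_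
        rw [Finset.sum_apply]
        by_cases h : ∃ c ∈ t, ω ∈ B c
        · obtain ⟨c₀, hc₀t, hc₀⟩ := h
          have hsingle : ∑ c ∈ t, ind c ω = ind c₀ ω := by
            refine Finset.sum_eq_single_of_mem c₀ hc₀t fun d hd hne => ?_
            have hnd : ω ∉ B d := fun hωd =>
              Set.disjoint_left.mp (hdisj d hd c₀ hc₀t hne) hωd hc₀
            simp [hind_def, Set.indicator_of_notMem hnd]
          rw [hsingle]
          exact hind_le_one c₀ ω
        · push_neg at h
          have : ∑ c ∈ t, ind c ω = 0 :=
            Finset.sum_eq_zero fun d hd => by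
              simp [hind_def, Set.indicator_of_notMem (h d hd)]
          rw [this]; norm_num
      have h3 := condExp_mono (m := 𝔄)
        (integrable_finset_sum' t fun c _ => hind_int c) (integrable_const (1:ℝ)) hb
      refine h3.trans ?_
      rw [condExp_const h𝔄]
    filter_upwards [h1, h2] with ω hω1 hω2
    calc ∑ c ∈ t, g c ω = (∑ c ∈ t, g c) ω := (Finset.sum_apply ω t g).symm
      _ = (P[(∑ c ∈ t, ind c)|𝔄]) ω := hω1.symm
      _ ≤ 1 := hω2
  have hg0all : ∀ᵐ ω ∂P, ∀ c ∈ (t : Set ℝ), 0 ≤ g c ω := by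
    rw [MeasureTheory.ae_ball_iff t.countable_toSet]
    intro c _
    filter_upwards [hg_nonneg c] with ω h
    simpa using h
  have hsum_f_le : ∀ᵐ ω ∂P, ∑ c ∈ t, |f c ω| ≤ 2 := by
    filter_upwards [hsum_g, hg0all] with ω h1 h2
    calc ∑ c ∈ t, |f c ω| ≤ ∑ c ∈ t, (g c ω + Q c) := by
          refine Finset.sum_le_sum fun c hc => ?_
          rw [abs_le]
          constructor
          · simp only [hfdef]; linarith [h2 c (Finset.mem_coe.mpr hc), hQ0 c]
          · simp only [hfdef]; linarith [h2 c (Finset.mem_coe.mpr hc), hQ0 c]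
      _ = (∑ c ∈ t, g c ω) + ∑ c ∈ t, Q c := Finset.sum_add_distrib
      _ ≤ 1 + 1 := add_le_add h1 hQsum
      _ = 2 := by norm_num
  -- step (e): pointwise Cauchy-Schwarz
  have hk_sq : ∀ᵐ ω ∂P, k ω ^ 2 ≤ 2 * ∑ c ∈ t, c ^ 2 * |f c ω| := by
    filter_upwards [hsum_f_le] with ω h1
    have e1 : |k ω| ≤ ∑ c ∈ t, |c| * |f c ω| := by
      simp only [hkdef]
      refine (Finset.abs_sum_le_sum_abs _ _).trans ?_
      refine le_of_eq (Finset.sum_congr rfl fun c _ => ?_)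
      rw [abs_mul]
    have e2 : (∑ c ∈ t, |c| * |f c ω|) ^ 2 ≤
        (∑ c ∈ t, |f c ω|) * ∑ c ∈ t, c ^ 2 * |f c ω| := by
      have := Finset.sum_mul_sq_le_sq_mul_sq t (fun c => Real.sqrt (|f c ω|))
        (fun c => |c| * Real.sqrt (|f c ω|))
      calc (∑ c ∈ t, |c| * |f c ω|) ^ 2
          = (∑ c ∈ t, Real.sqrt (|f c ω|) * (|c| * Real.sqrt (|f c ω|))) ^ 2 := by
            congr 1
            refine Finset.sum_congr rfl fun c _ => ?_
            rw [show Real.sqrt (|f c ω|) * (|c| * Real.sqrt (|f c ω|))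
               = |c| * (Real.sqrt (|f c ω|) * Real.sqrt (|f c ω|)) by ring,
              Real.mul_self_sqrt (abs_nonneg _)]
        _ ≤ (∑ c ∈ t, Real.sqrt (|f c ω|) ^ 2) * ∑ c ∈ t, (|c| * Real.sqrt (|f c ω|)) ^ 2 := this
        _ = (∑ c ∈ t, |f c ω|) * ∑ c ∈ t, c ^ 2 * |f c ω| := by
            congr 1
            · exact Finset.sum_congr rfl fun c _ => Real.sq_sqrt (abs_nonneg _)
            · refine Finset.sum_congr rfl fun c _ => ?_
              rw [mul_pow, Real.sq_sqrt (abs_nonneg _), sq_abs]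
    have hnn : (0:ℝ) ≤ ∑ c ∈ t, c ^ 2 * |f c ω| :=
      Finset.sum_nonneg fun c _ => mul_nonneg (sq_nonneg _) (abs_nonneg _)
    calc k ω ^ 2 = |k ω| ^ 2 := (sq_abs _).symm
      _ ≤ (∑ c ∈ t, |c| * |f c ω|) ^ 2 := by
          refine pow_le_pow_left₀ (abs_nonneg _) e1 2
      _ ≤ (∑ c ∈ t, |f c ω|) * ∑ c ∈ t, c ^ 2 * |f c ω| := e2
      _ ≤ 2 * ∑ c ∈ t, c ^ 2 * |f c ω| := mul_le_mul_of_nonneg_right h1 hnn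
  -- memberships
  have hY_mem : MemLp Y 2 P := by
    refine memLp_finset_sum t fun c _ => ?_
    exact memLp_indicator_const 2 (hBF c) c (Or.inr (measure_ne_top P _))
  have hf_mem : ∀ c, MemLp (f c) 2 P := fun c =>
    MemLp.of_bound (hf_measF c) 1 (hf_bd c)
  have hk_mem : MemLp k 2 P := by
    refine memLp_finset_sum t fun c _ => ?_
    exact (hf_mem c).const_mul c
  -- step: integral of k²
  have hIk : ∫ ω, k ω ^ 2 ∂P ≤ 4 * φ * ∑ c ∈ t, c ^ 2 * Q c := by
    have h1 : ∫ ω, k ω ^ 2 ∂P ≤ ∫ ω, 2 * ∑ c ∈ t, c ^ 2 * |f c ω| ∂P := by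
      refine integral_mono_ae hk_mem.integrable_sq ?_ hk_sq
      exact (integrable_finset_sum t fun c _ => ((hf_int c).abs.const_mul (c ^ 2))).const_mul 2
    have h2 : ∫ ω, 2 * ∑ c ∈ t, c ^ 2 * |f c ω| ∂P
        = 2 * ∑ c ∈ t, c ^ 2 * ∫ ω, |f c ω| ∂P := by
      rw [integral_const_mul]
      congr 1
      rw [integral_finset_sum t fun c _ => (hf_int c).abs.const_mul (c ^ 2)]
      exact Finset.sum_congr rfl fun c _ => integral_const_mul _ _
    have h3 : ∑ c ∈ t, c ^ 2 * ∫ ω, |f c ω| ∂P ≤ ∑ c ∈ t, c ^ 2 * (2 * φ * Q c) :=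
      Finset.sum_le_sum fun c _ => mul_le_mul_of_nonneg_left (hEf c) (sq_nonneg c)
    calc ∫ ω, k ω ^ 2 ∂P ≤ 2 * ∑ c ∈ t, c ^ 2 * ∫ ω, |f c ω| ∂P := by rw [← h2]; exact h1
      _ ≤ 2 * ∑ c ∈ t, c ^ 2 * (2 * φ * Q c) := by linarith [h3]
      _ = 4 * φ * ∑ c ∈ t, c ^ 2 * Q c := by
          rw [Finset.mul_sum, Finset.mul_sum]
          exact Finset.sum_congr rfl fun c _ => by ring
  -- ∫ Y² = ∑ c² Q c
  have hYsq : ∫ ω, Y ω ^ 2 ∂P = ∑ c ∈ t, c ^ 2 * Q c := by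
    have hpt : ∀ ω, Y ω ^ 2 = ∑ c ∈ t, (B c).indicator (fun _ => c ^ 2) ω := by
      intro ω
      by_cases h : ∃ c ∈ t, ω ∈ B c
      · obtain ⟨c₀, hc₀t, hc₀⟩ := h
        have hY1 : Y ω = c₀ := by
          simp only [hYdef]
          rw [Finset.sum_eq_single_of_mem c₀ hc₀t fun d hd hne => ?_]
          · simp [Set.indicator_of_mem hc₀]
          · have hnd : ω ∉ B d := fun hωd =>
              Set.disjoint_left.mp (hdisj d hd c₀ hc₀t hne) hωd hc₀
            simp [Set.indicator_of_notMem hnd]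
        have hR : ∑ c ∈ t, (B c).indicator (fun _ => c ^ 2) ω = c₀ ^ 2 := by
          rw [Finset.sum_eq_single_of_mem c₀ hc₀t fun d hd hne => ?_]
          · simp [Set.indicator_of_mem hc₀]
          · have hnd : ω ∉ B d := fun hωd =>
              Set.disjoint_left.mp (hdisj d hd c₀ hc₀t hne) hωd hc₀
            simp [Set.indicator_of_notMem hnd]
        rw [hY1, hR]
      · push_neg at h
        have hY0 : Y ω = 0 := by
          simp only [hYdef]
          exact Finset.sum_eq_zero fun d hd => by
            simp [Set.indicator_of_notMem (h d hd)]
        have hR : ∑ c ∈ t, (B c).indicator (fun _ => c ^ 2) ω = 0 :=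
          Finset.sum_eq_zero fun d hd => by
            simp [Set.indicator_of_notMem (h d hd)]
        rw [hY0, hR]
        norm_num
    calc ∫ ω, Y ω ^ 2 ∂P = ∫ ω, ∑ c ∈ t, (B c).indicator (fun _ => c ^ 2) ω ∂P := by
          exact integral_congr_ae (Filter.Eventually.of_forall hpt)
      _ = ∑ c ∈ t, ∫ ω, (B c).indicator (fun _ => c ^ 2) ω ∂P :=
          integral_finset_sum t fun c _ => (integrable_const _).indicator (hBF c)
      _ = ∑ c ∈ t, c ^ 2 * Q c := by
          refine Finset.sum_congr rfl fun c _ => ?_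
          rw [integral_indicator_const _ (hBF c), smul_eq_mul, mul_comm, measureReal_def]
  -- eLpNorm bound for k
  have hkn : (eLpNorm k 2 P).toReal ≤ 2 * Real.sqrt φ * (eLpNorm Y 2 P).toReal := by
    have ha : (0:ℝ) ≤ (eLpNorm k 2 P).toReal := ENNReal.toReal_nonneg
    have hb : (0:ℝ) ≤ (eLpNorm Y 2 P).toReal := ENNReal.toReal_nonneg
    have hsq : (eLpNorm k 2 P).toReal ^ 2 ≤ (2 * Real.sqrt φ * (eLpNorm Y 2 P).toReal) ^ 2 := by
      rw [sq_eLpNorm P hk_mem]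
      have : (2 * Real.sqrt φ * (eLpNorm Y 2 P).toReal) ^ 2
          = 4 * φ * ((eLpNorm Y 2 P).toReal ^ 2) := by
        rw [mul_pow, mul_pow, Real.sq_sqrt hφ0]
        ring
      rw [this, sq_eLpNorm P hY_mem, hYsq]
      exact hIk
    calc (eLpNorm k 2 P).toReal = Real.sqrt ((eLpNorm k 2 P).toReal ^ 2) :=
          (Real.sqrt_sq ha).symm
      _ ≤ Real.sqrt ((2 * Real.sqrt φ * (eLpNorm Y 2 P).toReal) ^ 2) :=
          Real.sqrt_le_sqrt hsq
      _ = 2 * Real.sqrt φ * (eLpNorm Y 2 P).toReal :=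
          Real.sqrt_sq (by positivity)
  -- step (f): covariance identity  Cov = ∫ X k
  have hXY_int : ∀ c : ℝ, Integrable (fun ω => X ω * (B c).indicator (fun _ => c) ω) P := by
    intro c
    have he : (fun ω => X ω * (B c).indicator (fun _ => c) ω)
        = (B c).indicator (fun ω => X ω * c) := by
      funext ω
      by_cases h : ω ∈ B c <;>
        simp [Set.indicator_of_mem, Set.indicator_of_notMem, h]
    rw [he]
    exact (hXint.mul_const c).indicator (hBF c)
  have hXind_int : ∀ c : ℝ, Integrable (X * ind c) P := by
    intro c
    have he : X * ind c = (B c).indicator X := by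
      funext ω
      by_cases h : ω ∈ B c <;>
        simp [hind_def, Set.indicator_of_mem, Set.indicator_of_notMem, h]
    rw [he]
    exact hXint.indicator (hBF c)
  have hXf_int : ∀ c : ℝ, Integrable (fun ω => X ω * f c ω) P := by
    intro c
    refine Integrable.mono' hXint.abs (hXm.aestronglyMeasurable.mul (hf_measF c)) ?_
    filter_upwards [hf_bd c] with ω h
    rw [Real.norm_eq_abs, abs_mul]
    calc |X ω| * |f c ω| ≤ |X ω| * 1 := mul_le_mul_of_nonneg_left h (abs_nonneg _)
      _ = |X ω| := mul_one _
  have hXg_int : ∀ c : ℝ, Integrable (fun ω => X ω * g c ω) P := by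
    intro c
    refine Integrable.congr ((hXf_int c).add (hXint.mul_const (Q c))) ?_
    refine Filter.Eventually.of_forall fun ω => ?_
    simp only [hfdef, Pi.add_apply]
    ring
  have hXg : ∀ c : ℝ, ∫ ω, X ω * g c ω ∂P = ∫ ω in B c, X ω ∂P := by
    intro c
    have hmul : P[X * ind c|𝔄] =ᵐ[P] X * P[ind c|𝔄] :=
      condExp_mul_of_stronglyMeasurable_left hX.stronglyMeasurable (hXind_int c) (hind_int c)
    have h1 : ∫ ω, X ω * g c ω ∂P = ∫ ω, (P[X * ind c|𝔄]) ω ∂P := by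
      refine (integral_congr_ae ?_).symm
      filter_upwards [hmul] with ω hω
      rw [hω]
      simp [hgdef]
    have h2 : ∫ ω, (P[X * ind c|𝔄]) ω ∂P = ∫ ω, (X * ind c) ω ∂P :=
      integral_condExp h𝔄
    have h3 : ∫ ω, (X * ind c) ω ∂P = ∫ ω in B c, X ω ∂P := by
      have he : X * ind c = (B c).indicator X := by
        funext ω
        by_cases h : ω ∈ B c <;>
          simp [hind_def, Set.indicator_of_mem, Set.indicator_of_notMem, h]
      rw [he, integral_indicator (hBF c)]
    rw [h1, h2, h3]
  have hXf : ∀ c : ℝ, ∫ ω, X ω * f c ω ∂P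
      = (∫ ω in B c, X ω ∂P) - Q c * ∫ ω, X ω ∂P := by
    intro c
    have h1 : ∫ ω, X ω * f c ω ∂P = ∫ ω, (X ω * g c ω - Q c * X ω) ∂P := by
      refine integral_congr_ae (Filter.Eventually.of_forall fun ω => ?_)
      simp only [hfdef]
      ring
    rw [h1, integral_sub (hXg_int c) (hXint.const_mul (Q c)), hXg c, integral_const_mul]
  have hcov : (∫ ω, X ω * Y ω ∂P) - (∫ ω, X ω ∂P) * (∫ ω, Y ω ∂P)
      = ∫ ω, X ω * k ω ∂P := by
    have h1 : ∫ ω, X ω * Y ω ∂P = ∑ c ∈ t, ∫ ω, X ω * (B c).indicator (fun _ => c) ω ∂P := by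
      rw [← integral_finset_sum t fun c _ => hXY_int c]
      refine integral_congr_ae (Filter.Eventually.of_forall fun ω => ?_)
      simp only [hYdef]
      rw [Finset.mul_sum]
    have h2 : ∀ c : ℝ, ∫ ω, X ω * (B c).indicator (fun _ => c) ω ∂P
        = c * ∫ ω in B c, X ω ∂P := by
      intro c
      have he : (fun ω => X ω * (B c).indicator (fun _ => c) ω)
          = (B c).indicator (fun ω => c * X ω) := by
        funext ω
        by_cases h : ω ∈ B c <;>
          simp [Set.indicator_of_mem, Set.indicator_of_notMem, h, mul_comm]
      rw [he, integral_indicator (hBF c), integral_const_mul]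
    have h3 : ∫ ω, Y ω ∂P = ∑ c ∈ t, c * Q c := by
      have := integral_finset_sum t (μ := P)
        (f := fun c ω => (B c).indicator (fun _ => c) ω)
        (fun c _ => (integrable_const c).indicator (hBF c))
      rw [hYdef]
      rw [this]
      refine Finset.sum_congr rfl fun c _ => ?_
      rw [integral_indicator_const _ (hBF c), smul_eq_mul, mul_comm, measureReal_def]
    have h4 : ∫ ω, X ω * k ω ∂P = ∑ c ∈ t, c * ∫ ω, X ω * f c ω ∂P := by
      have he : ∀ ω, X ω * k ω = ∑ c ∈ t, c * (X ω * f c ω) := by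
        intro ω
        simp only [hkdef]
        rw [Finset.mul_sum]
        exact Finset.sum_congr rfl fun c _ => by ring
      rw [integral_congr_ae (Filter.Eventually.of_forall he),
        integral_finset_sum t fun c _ => (hXf_int c).const_mul c]
      exact Finset.sum_congr rfl fun c _ => integral_const_mul c _
    rw [h1, h3, h4]
    have h5 : ∀ c ∈ t, c * ∫ ω, X ω * f c ω ∂P
        = c * ∫ ω in B c, X ω ∂P - c * Q c * ∫ ω, X ω ∂P := by
      intro c _
      rw [hXf c]
      ring
    rw [Finset.sum_congr rfl h5, Finset.sum_sub_distrib]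
    rw [Finset.sum_congr rfl fun c hc => (h2 c)]
    rw [← Finset.sum_mul, Finset.mul_sum]
    ring_nf
    rw [Finset.mul_sum]
    congr 1
    exact Finset.sum_congr rfl fun c _ => by ring
  -- conclusion
  rw [hcov]
  calc |∫ ω, X ω * k ω ∂P| ≤ (eLpNorm X 2 P).toReal * (eLpNorm k 2 P).toReal :=
        cs_integral P hX2 hk_mem
    _ ≤ (eLpNorm X 2 P).toReal * (2 * Real.sqrt φ * (eLpNorm Y 2 P).toReal) :=
        mul_le_mul_of_nonneg_left hkn ENNReal.toReal_nonneg
    _ = 2 * Real.sqrt φ * (eLpNorm X 2 P).toReal * (eLpNorm Y 2 P).toReal := by ring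
end


lemma int_mul {Ω : Type*} [F : MeasurableSpace Ω] (P : Measure Ω)
    {f g : Ω → ℝ} (hf : MemLp f 2 P) (hg : MemLp g 2 P) :
    Integrable (fun ω => f ω * g ω) P := by
  refine Integrable.mono' (hf.integrable_sq.add hg.integrable_sq) (hf.1.mul hg.1) ?_
  refine Filter.Eventually.of_forall fun ω => ?_
  rw [Real.norm_eq_abs, abs_mul]
  simp only [Pi.add_apply]
  nlinarith [sq_nonneg (|f ω| - |g ω|), sq_abs (f ω), sq_abs (g ω),
    mul_nonneg (abs_nonneg (f ω)) (abs_nonneg (g ω))]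

lemma abs_integral_le {Ω : Type*} [F : MeasurableSpace Ω] (P : Measure Ω)
    [IsProbabilityMeasure P] {f : Ω → ℝ} (hf : MemLp f 2 P) :
    |∫ ω, f ω ∂P| ≤ (eLpNorm f 2 P).toReal := by
  have h1 := cs_integral P hf (memLp_const (1:ℝ))
  simp only [mul_one] at h1
  have h2 : (eLpNorm (fun _ : Ω => (1:ℝ)) 2 P).toReal = 1 := by
    rw [eLpNorm_const (1:ℝ) two_ne_zero (IsProbabilityMeasure.ne_zero P)]
    simp
  rw [h2, mul_one] at h1
  exact h1

lemma simple_decomp {Ω : Type*} [m : MeasurableSpace Ω] (μ : Measure Ω) {Y : Ω → ℝ}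
    (hY : MemLp Y 2 μ) {ε : ENNReal} (hε : ε ≠ 0) :
    ∃ (t : Finset ℝ) (B : ℝ → Set Ω) (Z : Ω → ℝ),
      (∀ c, MeasurableSet (B c)) ∧
      (∀ c ∈ t, ∀ d ∈ t, c ≠ d → Disjoint (B c) (B d)) ∧
      (∀ ω, Z ω = ∑ c ∈ t, (B c).indicator (fun _ => c) ω) ∧
      StronglyMeasurable Z ∧
      eLpNorm (Y - Z) 2 μ < ε ∧ MemLp Z 2 μ := by
  obtain ⟨gs, hgs, hgsmem⟩ := hY.exists_simpleFunc_eLpNorm_sub_lt (by norm_num) hε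
  refine ⟨gs.range, fun c => ⇑gs ⁻¹' {c}, ⇑gs, fun c => gs.measurableSet_fiber c, ?_, ?_,
    gs.stronglyMeasurable, hgs, hgsmem⟩
  · intro c _ d _ hne
    rw [Set.disjoint_left]
    intro ω hc hd
    simp only [Set.mem_preimage, Set.mem_singleton_iff] at hc hd
    exact hne (hc.symm.trans hd)
  · intro ω
    rw [Finset.sum_eq_single_of_mem (gs ω) (gs.mem_range_self ω)]
    · simp [Set.indicator_of_mem, Set.mem_preimage]
    · intro d _ hne
      have : ω ∉ ⇑gs ⁻¹' {d} := by
        simp only [Set.mem_preimage, Set.mem_singleton_iff]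
        exact fun h => hne h.symm
      simp [Set.indicator_of_notMem this]

/-- Ibragimov–Linnik covariance inequality: if `φ` bounds the mixing ratios
`|P(A∩B) − P(A)P(B)| / P(B)` over all `A ∈ 𝔄`, `B ∈ 𝔅` with `P(B) > 0` (i.e. `φ` is an upper
bound for the mixing coefficient `φ(𝔄,𝔅)`), then for all square-integrable real random
variables `X` (`𝔄`-measurable) and `Y` (`𝔅`-measurable),
`|E[XY] − E[X]E[Y]| ≤ 2 φ^{1/2} ‖X‖_{L²} ‖Y‖_{L²}`. -/
theorem ibragimov_linnik_covariance_inequality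
    {Ω : Type*} [F : MeasurableSpace Ω] (P : Measure Ω) [IsProbabilityMeasure P]
    (𝔄 𝔅 : MeasurableSpace Ω) (h𝔄 : 𝔄 ≤ F) (h𝔅 : 𝔅 ≤ F)
    (φ : ℝ)
    (hφ : ∀ A B : Set Ω, MeasurableSet[𝔄] A → MeasurableSet[𝔅] B → 0 < (P B).toReal →
      |(P (A ∩ B)).toReal - (P A).toReal * (P B).toReal| ≤ φ * (P B).toReal)
    (X Y : Ω → ℝ) (hX : Measurable[𝔄] X) (hY : Measurable[𝔅] Y)
    (hX2 : MemLp X 2 P) (hY2 : MemLp Y 2 P) :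
    |(∫ ω, X ω * Y ω ∂P) - (∫ ω, X ω ∂P) * (∫ ω, Y ω ∂P)| ≤
      2 * Real.sqrt φ * (eLpNorm X 2 P).toReal * (eLpNorm Y 2 P).toReal := by
  letI : MeasurableSpace Ω := F
  have hφ0 : 0 ≤ φ := by
    have h := hφ ∅ Set.univ (@MeasurableSet.empty Ω 𝔄) (@MeasurableSet.univ Ω 𝔅) (by simp)
    simpa using h
  set nX := (eLpNorm X 2 P).toReal with hnX
  set nY := (eLpNorm Y 2 P).toReal with hnY
  have hnX0 : 0 ≤ nX := ENNReal.toReal_nonneg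
  have hXint : Integrable X P := hX2.integrable one_le_two
  have key : ∀ ε : ℝ, 0 < ε →
      |(∫ ω, X ω * Y ω ∂P) - (∫ ω, X ω ∂P) * (∫ ω, Y ω ∂P)| ≤
        2 * Real.sqrt φ * nX * nY + (2 * Real.sqrt φ * nX + 2 * nX) * ε := by
    intro ε hε
    have hYsm : StronglyMeasurable[𝔅] Y := hY.stronglyMeasurable
    have hYt : MemLp Y 2 (P.trim h𝔅) :=
      ⟨hYsm.aestronglyMeasurable, by rw [eLpNorm_trim h𝔅 hYsm]; exact hY2.2⟩
    have hε' : ENNReal.ofReal ε ≠ 0 := by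
      simp [ENNReal.ofReal_eq_zero, not_le, hε]
    obtain ⟨t, B, Z, hBmeas, hdisj, hZrep, hZsm, hgs, hZ2t⟩ :=
      @simple_decomp Ω 𝔅 (P.trim h𝔅) Y hYt _ hε'
    have hYZsm : StronglyMeasurable[𝔅] (Y - Z) := hYsm.sub hZsm
    have hYZ : eLpNorm (Y - Z) 2 P < ENNReal.ofReal ε := by
      rw [← eLpNorm_trim h𝔅 hYZsm]
      exact hgs
    have hZ2 : MemLp Z 2 P :=
      ⟨(hZsm.mono h𝔅).aestronglyMeasurable, by rw [← eLpNorm_trim h𝔅 hZsm]; exact hZ2t.2⟩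
    have hYZ2 : MemLp (Y - Z) 2 P := hY2.sub hZ2
    have hZeq : (fun ω => ∑ c ∈ t, (B c).indicator (fun _ => c) ω) = Z :=
      funext fun ω => (hZrep ω).symm
    have hcore := core P 𝔄 𝔅 h𝔄 h𝔅 φ hφ0 hφ X hX hX2 t B hBmeas hdisj
    rw [hZeq] at hcore
    have hcoreZ : |(∫ ω, X ω * Z ω ∂P) - (∫ ω, X ω ∂P) * (∫ ω, Z ω ∂P)| ≤
        2 * Real.sqrt φ * nX * (eLpNorm Z 2 P).toReal := by
      have h1 : ∫ ω, X ω * (∑ c ∈ t, (B c).indicator (fun _ => c) ω) ∂P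
          = ∫ ω, X ω * Z ω ∂P :=
        integral_congr_ae (Filter.Eventually.of_forall fun ω => by
          show X ω * (∑ c ∈ t, (B c).indicator (fun _ => c) ω) = X ω * Z ω
          rw [← hZrep ω])
      rw [h1] at hcore
      exact hcore
    -- error estimates
    have hWnorm : (eLpNorm (Y - Z) 2 P).toReal ≤ ε :=
      ENNReal.toReal_le_of_le_ofReal hε.le hYZ.le
    have hZnorm : (eLpNorm Z 2 P).toReal ≤ nY + ε := by
      have h1 : eLpNorm Z 2 P ≤ eLpNorm Y 2 P + eLpNorm (Y - Z) 2 P := by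
        have hrw : Z = Y - (Y - Z) := by funext ω; simp
        nth_rewrite 1 [hrw]
        exact eLpNorm_sub_le hY2.1 hYZ2.1 one_le_two
      have h2 := ENNReal.toReal_le_add h1 hY2.2.ne hYZ2.2.ne
      linarith [hWnorm]
    have hcovW : |(∫ ω, X ω * (Y ω - Z ω) ∂P) - (∫ ω, X ω ∂P) * (∫ ω, (Y ω - Z ω) ∂P)| ≤
        2 * nX * ε := by
      have e1 : |∫ ω, X ω * (Y ω - Z ω) ∂P| ≤ nX * (eLpNorm (Y - Z) 2 P).toReal :=
        cs_integral P hX2 hYZ2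
      have e2 : |∫ ω, X ω ∂P| ≤ nX := abs_integral_le P hX2
      have e3 : |∫ ω, (Y ω - Z ω) ∂P| ≤ (eLpNorm (Y - Z) 2 P).toReal := abs_integral_le P hYZ2
      have e4 : |(∫ ω, X ω ∂P) * (∫ ω, (Y ω - Z ω) ∂P)| ≤ nX * (eLpNorm (Y - Z) 2 P).toReal := by
        rw [abs_mul]
        exact mul_le_mul e2 e3 (abs_nonneg _) hnX0
      have hW0 : 0 ≤ (eLpNorm (Y - Z) 2 P).toReal := ENNReal.toReal_nonneg
      calc |(∫ ω, X ω * (Y ω - Z ω) ∂P) - (∫ ω, X ω ∂P) * (∫ ω, (Y ω - Z ω) ∂P)|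
          ≤ |∫ ω, X ω * (Y ω - Z ω) ∂P| + |(∫ ω, X ω ∂P) * (∫ ω, (Y ω - Z ω) ∂P)| :=
            abs_sub _ _
        _ ≤ nX * (eLpNorm (Y - Z) 2 P).toReal + nX * (eLpNorm (Y - Z) 2 P).toReal :=
            add_le_add e1 e4
        _ ≤ nX * ε + nX * ε := by
            have := mul_le_mul_of_nonneg_left hWnorm hnX0
            linarith
        _ = 2 * nX * ε := by ring
    -- decomposition
    have hdecomp : (∫ ω, X ω * Y ω ∂P) - (∫ ω, X ω ∂P) * (∫ ω, Y ω ∂P)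
        = ((∫ ω, X ω * Z ω ∂P) - (∫ ω, X ω ∂P) * (∫ ω, Z ω ∂P))
          + ((∫ ω, X ω * (Y ω - Z ω) ∂P) - (∫ ω, X ω ∂P) * (∫ ω, (Y ω - Z ω) ∂P)) := by
      have i1 : Integrable (fun ω => X ω * Z ω) P := int_mul P hX2 hZ2
      have i2 : Integrable (fun ω => X ω * (Y ω - Z ω)) P := int_mul P hX2 hYZ2
      have i3 : Integrable (fun ω => Y ω - Z ω) P :=
        (hY2.integrable one_le_two).sub (hZ2.integrable one_le_two)
      have hXY : ∫ ω, X ω * Y ω ∂P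
          = (∫ ω, X ω * Z ω ∂P) + ∫ ω, X ω * (Y ω - Z ω) ∂P := by
        rw [← integral_add i1 i2]
        refine integral_congr_ae (Filter.Eventually.of_forall fun ω => ?_)
        ring
      have hYint : ∫ ω, Y ω ∂P = (∫ ω, Z ω ∂P) + ∫ ω, (Y ω - Z ω) ∂P := by
        rw [← integral_add (hZ2.integrable one_le_two) i3]
        refine integral_congr_ae (Filter.Eventually.of_forall fun ω => ?_)
        simp
      rw [hXY, hYint]
      ring
    calc |(∫ ω, X ω * Y ω ∂P) - (∫ ω, X ω ∂P) * (∫ ω, Y ω ∂P)|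
        ≤ |(∫ ω, X ω * Z ω ∂P) - (∫ ω, X ω ∂P) * (∫ ω, Z ω ∂P)|
          + |(∫ ω, X ω * (Y ω - Z ω) ∂P) - (∫ ω, X ω ∂P) * (∫ ω, (Y ω - Z ω) ∂P)| := by
          rw [hdecomp]; exact abs_add_le _ _
      _ ≤ 2 * Real.sqrt φ * nX * (nY + ε) + 2 * nX * ε := by
          refine add_le_add (hcoreZ.trans ?_) hcovW
          refine mul_le_mul_of_nonneg_left hZnorm ?_
          positivity
      _ = 2 * Real.sqrt φ * nX * nY + (2 * Real.sqrt φ * nX + 2 * nX) * ε := by ring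
  refine le_of_forall_pos_le_add fun δ hδ => ?_
  set c := 2 * Real.sqrt φ * nX + 2 * nX with hc
  have hc0 : 0 ≤ c := by positivity
  have hεpos : 0 < δ / (c + 1) := div_pos hδ (by linarith)
  have h := key (δ / (c + 1)) hεpos
  have hle : c * (δ / (c + 1)) ≤ δ := by
    rw [← mul_div_assoc, div_le_iff₀ (by linarith : (0:ℝ) < c + 1)]
    nlinarith
  calc |(∫ ω, X ω * Y ω ∂P) - (∫ ω, X ω ∂P) * (∫ ω, Y ω ∂P)|
      ≤ 2 * Real.sqrt φ * nX * nY + c * (δ / (c + 1)) := h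
    _ ≤ 2 * Real.sqrt φ * nX * nY + δ := by linarith
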